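/- arXiv:2105.10327 — 3 statements merged into one kernel-verified Lean document; each statement's English description precedes it below -/
import Mathlib

section
/- Let Σ be a finite alphabet and T : {1,…,n} → Σ a text of length n. For position i, let c_{≥i}(T[i]) be the number of indices j with i ≤ j ≤ n and T[j] = T[i], and let occ(σ) be the total number of occurrences of σ in T. Then the final range of forward-looking adaptive arithmetic coding satisfies r_f(T) = ∏_{i=1}^{n} c_{≥i}(T[i])/(n − i + 1) = (1/n!) · ∏_{σ ∈ Σ} occ(σ)!. -/
open Finset

lemma shift_card {α : Type*} [DecidableEq α] {n : ℕ} (T : Fin (n+1) → α) (i : Fin n) :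
    (univ.filter (fun j : Fin (n+1) => i.succ ≤ j ∧ T j = T i.succ)).card =
    (univ.filter (fun j : Fin n => i ≤ j ∧ T j.succ = T i.succ)).card := by
  rw [Finset.card_filter, Finset.card_filter, Fin.sum_univ_succ]
  have h0 : ¬ (i.succ ≤ (0 : Fin (n+1)) ∧ T 0 = T i.succ) := by
    rintro ⟨h, -⟩
    exact absurd h (by simp [Fin.lt_iff_val_lt_val, Fin.le_iff_val_le_val])
  rw [if_neg h0, zero_add]
  refine Finset.sum_congr rfl fun j _ => ?_
  congr 1
  simp [Fin.succ_le_succ_iff]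

lemma key {α : Type*} [Fintype α] [DecidableEq α] : ∀ {n : ℕ} (T : Fin n → α),
    (∏ i : Fin n, (univ.filter (fun j => i ≤ j ∧ T j = T i)).card) =
    ∏ σ : α, Nat.factorial (univ.filter (fun j => T j = σ)).card := by
  intro n
  induction n with
  | zero => intro T; simp
  | succ n ih =>
    intro T
    have occ_split : ∀ σ : α, (univ.filter (fun j : Fin (n+1) => T j = σ)).card =
        (if T 0 = σ then 1 else 0) + (univ.filter (fun j : Fin n => T j.succ = σ)).card := by
      intro σ
      rw [Finset.card_filter, Finset.card_filter, Fin.sum_univ_succ]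
    have hfirst : (univ.filter (fun j : Fin (n+1) => (0:Fin (n+1)) ≤ j ∧ T j = T 0)).card =
        (univ.filter (fun j : Fin (n+1) => T j = T 0)).card := by
      congr 1
      apply Finset.filter_congr
      intro j _
      simp [Fin.zero_le]
    rw [Fin.prod_univ_succ, hfirst]
    have hprod : (∏ i : Fin n,
        (univ.filter (fun j : Fin (n+1) => i.succ ≤ j ∧ T j = T i.succ)).card) =
        ∏ σ : α, Nat.factorial (univ.filter (fun j : Fin n => T j.succ = σ)).card := by
      rw [← ih (fun j => T j.succ)]
      exact Finset.prod_congr rfl fun i _ => shift_card T i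
    rw [hprod]
    -- remaining: occ_T(T 0) * ∏ σ occ_tail(σ)! = ∏ σ occ_T(σ)!
    rw [← Finset.mul_prod_erase univ _ (Finset.mem_univ (T 0)),
        ← Finset.mul_prod_erase univ
          (fun σ => Nat.factorial (univ.filter (fun j : Fin (n+1) => T j = σ)).card)
          (Finset.mem_univ (T 0))]
    have h1 : (univ.filter (fun j : Fin (n+1) => T j = T 0)).card =
        (univ.filter (fun j : Fin n => T j.succ = T 0)).card + 1 := by
      rw [occ_split (T 0), if_pos rfl]; omega
    have h2 : ∀ σ ∈ univ.erase (T 0),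
        Nat.factorial (univ.filter (fun j : Fin n => T j.succ = σ)).card =
        Nat.factorial (univ.filter (fun j : Fin (n+1) => T j = σ)).card := by
      intro σ hσ
      rw [occ_split σ, if_neg (Finset.ne_of_mem_erase hσ).symm, zero_add]
    rw [Finset.prod_congr rfl h2, ← mul_assoc]
    congr 1
    rw [h1, Nat.factorial_succ]

lemma denom_prod (n : ℕ) : (∏ i : Fin n, (n - (i : ℕ))) = Nat.factorial n := by
  rw [Fin.prod_univ_eq_prod_range (fun i => n - i)]
  rw [← Finset.prod_range_reflect]
  rw [← Finset.prod_range_add_one_eq_factorial]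
  apply Finset.prod_congr rfl
  intro j hj
  rw [Finset.mem_range] at hj
  omega

/-- The final range of forward-looking adaptive arithmetic coding
satisfies `∏_{i=1}^n c_{≥i}(T i)/(n − i + 1) = (1/n!) · ∏ σ, (occ σ)!`.
Here position `i : Fin n` stands for the 1-based position `i+1`, so the
denominator `n − (i+1) + 1` is `n − i`. -/
theorem forward_adaptive_range_eq
    {α : Type*} [Fintype α] [DecidableEq α] {n : ℕ} (T : Fin n → α) :
    (∏ i : Fin n,
        ((univ.filter (fun j => i ≤ j ∧ T j = T i)).card : ℚ) /
          ((n - (i : ℕ) : ℕ) : ℚ)) =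
      (1 / (Nat.factorial n : ℚ)) *
        ∏ σ : α, (Nat.factorial (univ.filter (fun j => T j = σ)).card : ℚ) := by
  rw [Finset.prod_div_distrib]
  rw [← Nat.cast_prod, ← Nat.cast_prod, key T, ← Nat.cast_prod, denom_prod]
  rw [div_eq_mul_inv, mul_comm, ← one_div]
end

section
/- Let Σ be a finite alphabet and T : {1,…,n} → Σ a text of length n. Define r_f(T) = ∏_{i=1}^{n} c_{≥i}(T[i])/(n − i + 1), where c_{≥i}(T[i]) is the number of indices j with i ≤ j ≤ n and T[j] = T[i]. Then for every permutation π of {1,…,n}, r_f(T ∘ π) = r_f(T); i.e., the size of the file compressed by forward-looking adaptive arithmetic coding is invariant under permutations of the original input. -/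
open Finset

private lemma aux_prod_filter {n : ℕ} (s : Finset (Fin n)) :
    ∏ i ∈ s, (s.filter (fun j => i ≤ j)).card = Nat.factorial s.card := by
  classical
  induction s using Finset.strongInduction with
  | _ s ih =>
    rcases s.eq_empty_or_nonempty with rfl | hne
    · simp
    · set i0 := s.min' hne with hi0def
      have hi0 : i0 ∈ s := s.min'_mem hne
      rw [← Finset.mul_prod_erase s _ hi0]
      have h1 : s.filter (fun j => i0 ≤ j) = s := by
        apply Finset.filter_true_of_mem
        intro j hj
        exact s.min'_le j hj
      have h2 : ∀ i ∈ s.erase i0,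
          s.filter (fun j => i ≤ j) = (s.erase i0).filter (fun j => i ≤ j) := by
        intro i hi
        obtain ⟨hne', hist⟩ := Finset.mem_erase.mp hi
        have hlt : i0 < i := lt_of_le_of_ne (s.min'_le i hist) (Ne.symm hne')
        ext j
        simp only [Finset.mem_filter, Finset.mem_erase]
        constructor
        · rintro ⟨hj, hij⟩
          refine ⟨⟨?_, hj⟩, hij⟩
          rintro rfl
          exact absurd hij (not_le.mpr hlt)
        · rintro ⟨⟨_, hj⟩, hij⟩
          exact ⟨hj, hij⟩
      rw [h1, Finset.prod_congr rfl (fun i hi => by rw [h2 i hi]),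
        ih (s.erase i0) (Finset.erase_ssubset hi0)]
      have hcard : s.card = (s.erase i0).card + 1 := by
        have hpos := Finset.card_pos.mpr hne
        rw [Finset.card_erase_of_mem hi0]
        omega
      rw [hcard, Nat.factorial_succ]

private lemma prod_count_eq {α : Type*} [Fintype α] [DecidableEq α] {n : ℕ}
    (T : Fin n → α) :
    ∏ i : Fin n, (univ.filter (fun j => i ≤ j ∧ T j = T i)).card =
      ∏ a : α, Nat.factorial (univ.filter (fun j => T j = a)).card := by
  classical
  rw [← Finset.prod_fiberwise (univ : Finset (Fin n)) T
    (fun i => (univ.filter (fun j => i ≤ j ∧ T j = T i)).card)]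
  refine Finset.prod_congr rfl fun a _ => ?_
  have h : ∀ i ∈ univ.filter (fun i => T i = a),
      (univ.filter (fun j => i ≤ j ∧ T j = T i)).card =
        ((univ.filter (fun j => T j = a)).filter (fun j => i ≤ j)).card := by
    intro i hi
    have hTi : T i = a := (Finset.mem_filter.mp hi).2
    congr 1
    ext j
    simp [hTi, and_comm]
  rw [Finset.prod_congr rfl h]
  exact aux_prod_filter _

private lemma card_fiber_comp {α : Type*} [Fintype α] [DecidableEq α] {n : ℕ}
    (T : Fin n → α) (π : Equiv.Perm (Fin n)) (a : α) :
    (univ.filter (fun j => T (π j) = a)).card =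
      (univ.filter (fun j => T j = a)).card := by
  apply Finset.card_bij (fun j _ => π j)
  · intro j hj
    simp only [Finset.mem_filter, Finset.mem_univ, true_and] at *
    exact hj
  · intro j₁ _ j₂ _ h
    exact π.injective h
  · intro j hj
    refine ⟨π.symm j, ?_, by simp⟩
    simp only [Finset.mem_filter, Finset.mem_univ, true_and] at *
    simpa using hj

/-- The final range of forward-looking adaptive arithmetic coding,
`r_f(T) = ∏_{i=1}^n c_{≥i}(T i)/(n − i + 1)`, is invariant under permutations
of the input text; hence the compressed size `-log₂ r_f(T)` is permutation
invariant. -/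
theorem forward_adaptive_range_perm_invariant
    {α : Type*} [Fintype α] [DecidableEq α] {n : ℕ}
    (T : Fin n → α) (π : Equiv.Perm (Fin n)) :
    (∏ i : Fin n,
        ((univ.filter (fun j => i ≤ j ∧ (T ∘ π) j = (T ∘ π) i)).card : ℚ) /
          ((n - (i : ℕ) : ℕ) : ℚ)) =
      ∏ i : Fin n,
        ((univ.filter (fun j => i ≤ j ∧ T j = T i)).card : ℚ) /
          ((n - (i : ℕ) : ℕ) : ℚ) := by
  rw [Finset.prod_div_distrib, Finset.prod_div_distrib]
  congr 1
  rw [← Nat.cast_prod, ← Nat.cast_prod]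
  congr 1
  simp only [Function.comp]
  rw [prod_count_eq (fun j => T (π j)), prod_count_eq T]
  exact Finset.prod_congr rfl fun a _ => by rw [card_fiber_comp T π a]
end

section
/- Let Σ be a finite alphabet of size m ≥ 1 and T : {1,…,n} → Σ a text of length n. Let r_b(T) = ∏_{i=1}^{n} (c_{<i}(T[i]) + 1)/(m + i − 1) be the final range of backward adaptive arithmetic coding and r_f(T) = ∏_{i=1}^{n} c_{≥i}(T[i])/(n − i + 1) the final range of forward-looking adaptive arithmetic coding. Then r_f(T) = C(m + n − 1, n) · r_b(T), where C(m + n − 1, n) is the binomial coefficient; equivalently, the forward-looking encoding is shorter than the backward-looking encoding by exactly log₂ C(m + n − 1, n) bits, a quantity depending only on the alphabet size m and the text length n and not on the content of T. -/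
open Finset

-- product of lower-rank counts over a finset = card!
lemma prod_card_le {β : Type*} [LinearOrder β] (S : Finset β) :
    ∏ i ∈ S, (S.filter (· ≤ i)).card = Nat.factorial S.card := by
  induction S using Finset.strongInduction with
  | _ S ih =>
    rcases S.eq_empty_or_nonempty with rfl | hS
    · simp
    · have hM : S.max' hS ∈ S := S.max'_mem hS
      set M := S.max' hS with hMdef
      have h1 : ∏ i ∈ S, (S.filter (· ≤ i)).card
          = (S.filter (· ≤ M)).card * ∏ i ∈ S.erase M, (S.filter (· ≤ i)).card :=
        (Finset.mul_prod_erase S _ hM).symm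
      have h2 : S.filter (· ≤ M) = S :=
        Finset.filter_true_of_mem (fun x hx => S.le_max' x hx)
      have h3 : ∀ i ∈ S.erase M, (S.filter (· ≤ i)).card = ((S.erase M).filter (· ≤ i)).card := by
        intro i hi
        congr 1
        ext j
        simp only [mem_filter, mem_erase]
        constructor
        · rintro ⟨hjS, hji⟩
          refine ⟨⟨?_, hjS⟩, hji⟩
          rintro rfl
          exact (Finset.mem_erase.mp hi).1 (le_antisymm (S.le_max' i (Finset.mem_of_mem_erase hi)) hji)
        · rintro ⟨⟨_, hjS⟩, hji⟩; exact ⟨hjS, hji⟩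
      rw [h1, h2, Finset.prod_congr rfl h3, ih (S.erase M) (Finset.erase_ssubset hM),
        Finset.card_erase_of_mem hM]
      have hc : S.card = S.card - 1 + 1 := (Nat.succ_pred_eq_of_pos (Finset.card_pos.mpr hS)).symm
      rw [hc]
      rw [Nat.factorial_succ]
      simp

lemma prod_card_ge {β : Type*} [LinearOrder β] (S : Finset β) :
    ∏ i ∈ S, (S.filter (i ≤ ·)).card = Nat.factorial S.card := by
  induction S using Finset.strongInduction with
  | _ S ih =>
    rcases S.eq_empty_or_nonempty with rfl | hS
    · simp
    · have hM : S.min' hS ∈ S := S.min'_mem hS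
      set M := S.min' hS with hMdef
      have h1 : ∏ i ∈ S, (S.filter (i ≤ ·)).card
          = (S.filter (M ≤ ·)).card * ∏ i ∈ S.erase M, (S.filter (i ≤ ·)).card :=
        (Finset.mul_prod_erase S _ hM).symm
      have h2 : S.filter (M ≤ ·) = S :=
        Finset.filter_true_of_mem (fun x hx => S.min'_le x hx)
      have h3 : ∀ i ∈ S.erase M, (S.filter (i ≤ ·)).card = ((S.erase M).filter (i ≤ ·)).card := by
        intro i hi
        congr 1
        ext j
        simp only [mem_filter, mem_erase]
        constructor
        · rintro ⟨hjS, hji⟩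
          refine ⟨⟨?_, hjS⟩, hji⟩
          rintro rfl
          exact (Finset.mem_erase.mp hi).1 (le_antisymm hji (S.min'_le i (Finset.mem_of_mem_erase hi)))
        · rintro ⟨⟨_, hjS⟩, hji⟩; exact ⟨hjS, hji⟩
      rw [h1, h2, Finset.prod_congr rfl h3, ih (S.erase M) (Finset.erase_ssubset hM),
        Finset.card_erase_of_mem hM]
      have hc : S.card = S.card - 1 + 1 := (Nat.succ_pred_eq_of_pos (Finset.card_pos.mpr hS)).symm
      rw [hc, Nat.factorial_succ]
      simp


lemma prod_sub_eq_factorial (n : ℕ) : ∏ i ∈ range n, (n - i) = Nat.factorial n := by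
  rw [← Finset.prod_range_add_one_eq_factorial, ← Finset.prod_range_reflect (fun i => i + 1) n]
  refine Finset.prod_congr rfl fun i hi => ?_
  have := Finset.mem_range.mp hi
  omega


lemma prod_add_eq_choose_mul_factorial (m : ℕ) (hm : 1 ≤ m) (n : ℕ) :
    ∏ i ∈ range n, (m + i) = Nat.choose (m + n - 1) n * Nat.factorial n := by
  induction n with
  | zero => simp
  | succ n ih =>
    obtain ⟨k, hk⟩ : ∃ k, m + n = k + 1 := ⟨m + n - 1, by omega⟩
    have h0 : m + n - 1 = k := by omega
    have h1 : m + (n + 1) - 1 = k + 1 := by omega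
    rw [Finset.prod_range_succ, ih, Nat.factorial_succ, h0, h1, hk]
    have key : (k + 1) * Nat.choose k n = Nat.choose (k + 1) (n + 1) * (n + 1) := by
      simpa [Nat.succ_eq_add_one] using Nat.add_one_mul_choose_eq k n
    calc Nat.choose k n * Nat.factorial n * (k + 1)
        = ((k + 1) * Nat.choose k n) * Nat.factorial n := by ring
      _ = (Nat.choose (k + 1) (n + 1) * (n + 1)) * Nat.factorial n := by rw [key]
      _ = Nat.choose (k + 1) (n + 1) * ((n + 1) * Nat.factorial n) := by ring

lemma numerators_eq {α : Type*} [Fintype α] [DecidableEq α] {n : ℕ} (T : Fin n → α) :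
    ∏ i : Fin n, (univ.filter (fun j => i ≤ j ∧ T j = T i)).card
      = ∏ i : Fin n, ((univ.filter (fun j => j < i ∧ T j = T i)).card + 1) := by
  have hmap : ∀ i ∈ (univ : Finset (Fin n)), T i ∈ (univ : Finset α) := fun _ _ => mem_univ _
  rw [← Finset.prod_fiberwise_of_maps_to hmap, ← Finset.prod_fiberwise_of_maps_to hmap]
  refine Finset.prod_congr rfl fun a _ => ?_
  set S : Finset (Fin n) := univ.filter (fun i => T i = a) with hS
  have hL : ∀ i ∈ S, (univ.filter (fun j => i ≤ j ∧ T j = T i)).card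
      = (S.filter (i ≤ ·)).card := by
    intro i hi
    have hTi : T i = a := (Finset.mem_filter.mp hi).2
    congr 1
    ext j
    simp only [hS, mem_filter, mem_univ, true_and, hTi]
    tauto
  have hR : ∀ i ∈ S, (univ.filter (fun j => j < i ∧ T j = T i)).card + 1
      = (S.filter (· ≤ i)).card := by
    intro i hi
    have hTi : T i = a := (Finset.mem_filter.mp hi).2
    have hsplit : S.filter (· ≤ i) = insert i (S.filter (· < i)) := by
      ext j
      simp only [mem_insert, mem_filter, hS, mem_univ, true_and]
      constructor
      · rintro ⟨hja, hji⟩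
        rcases lt_or_eq_of_le hji with h | h
        · exact Or.inr ⟨hja, h⟩
        · exact Or.inl h
      · rintro (rfl | ⟨hja, hji⟩)
        · exact ⟨hTi, le_refl _⟩
        · exact ⟨hja, le_of_lt hji⟩
    have hnotmem : i ∉ S.filter (· < i) := by
      simp [mem_filter]
    have : (univ.filter (fun j => j < i ∧ T j = T i)) = S.filter (· < i) := by
      ext j
      simp only [hS, mem_filter, mem_univ, true_and, hTi]
      tauto
    rw [this, hsplit, Finset.card_insert_of_notMem hnotmem]
  rw [Finset.prod_congr rfl hL, Finset.prod_congr rfl hR, prod_card_ge, prod_card_le]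


/-- With `m = Fintype.card α ≥ 1`, the final ranges of backward
and forward-looking adaptive arithmetic coding satisfy
`r_f(T) = C(m + n − 1, n) · r_b(T)`, a relation depending only on `m` and `n`
and not on the content of `T`; equivalently, the forward-looking encoding is
shorter than the backward one by exactly `log₂ C(m+n−1, n)` bits. -/
theorem forward_eq_choose_mul_backward
    {α : Type*} [Fintype α] [DecidableEq α] (hm : 1 ≤ Fintype.card α)
    {n : ℕ} (T : Fin n → α) :
    (∏ i : Fin n,
        ((univ.filter (fun j => i ≤ j ∧ T j = T i)).card : ℚ) /
          ((n - (i : ℕ) : ℕ) : ℚ)) =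
      (Nat.choose (Fintype.card α + n - 1) n : ℚ) *
        ∏ i : Fin n,
          (((univ.filter (fun j => j < i ∧ T j = T i)).card + 1 : ℚ)) /
            (Fintype.card α + (i : ℕ)) := by
  set m := Fintype.card α with hmdef
  have hA := numerators_eq T
  have hB : ∏ i : Fin n, (n - (i : ℕ)) = Nat.factorial n := by
    rw [Fin.prod_univ_eq_prod_range]
    exact prod_sub_eq_factorial n
  have hD : ∏ i : Fin n, (m + (i : ℕ)) = Nat.choose (m + n - 1) n * Nat.factorial n := by
    rw [Fin.prod_univ_eq_prod_range]
    exact prod_add_eq_choose_mul_factorial m hm n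
  rw [Finset.prod_div_distrib, Finset.prod_div_distrib]
  have cA : (∏ i : Fin n, (((univ.filter (fun j => i ≤ j ∧ T j = T i)).card : ℚ)))
      = ∏ i : Fin n, (((univ.filter (fun j => j < i ∧ T j = T i)).card + 1 : ℚ)) := by
    exact_mod_cast hA
  have cB : (∏ i : Fin n, (((n - (i : ℕ) : ℕ)) : ℚ)) = (Nat.factorial n : ℚ) := by
    exact_mod_cast hB
  have cD : (∏ i : Fin n, ((m : ℚ) + ((i : ℕ) : ℚ)))
      = (Nat.choose (m + n - 1) n : ℚ) * (Nat.factorial n : ℚ) := by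
    exact_mod_cast hD
  rw [cA, cB, cD]
  have hC0 : (Nat.choose (m + n - 1) n : ℚ) ≠ 0 :=
    Nat.cast_ne_zero.mpr (Nat.choose_pos (by omega)).ne'
  have hF0 : (Nat.factorial n : ℚ) ≠ 0 := Nat.cast_ne_zero.mpr n.factorial_ne_zero
  rw [← mul_div_assoc, mul_div_mul_left _ _ hC0]
end
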